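/- With v_1, v_2, v_3 defined by the recursive Mex algorithm, for every n ≥ 1 the maximum of F_n equals v_3(n), and v_3(n) = v_2(n) + Mex(D_{n-1}). -/
import Mathlib


/-- Minimum excluded value of a set of natural numbers. -/
noncomputable def mex (S : Set ℕ) : ℕ := sInf {m : ℕ | m ∉ S}

/-- Coordinates of a set of triples. -/
def coords (G : Set (ℕ × ℕ × ℕ)) : Set ℕ :=
  {k | ∃ x ∈ G, k = x.1 ∨ k = x.2.1 ∨ k = x.2.2}

/-- Pairwise coordinate differences of a set of triples. -/
def diffs (G : Set (ℕ × ℕ × ℕ)) : Set ℕ :=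
  {d | ∃ x ∈ G, d = x.2.1 - x.1 ∨ d = x.2.2 - x.2.1 ∨ d = x.2.2 - x.1}

/-- One step of the Mex algorithm: the next P-position. -/
noncomputable def step (G : Set (ℕ × ℕ × ℕ)) : ℕ × ℕ × ℕ :=
  let F := coords G
  let D := diffs G
  let a := mex F
  let b := mex ((fun d => a + d) '' D ∪ Set.Icc 1 a ∪ F)
  let c := mex ((fun d => b + d) '' D ∪ Set.Icc 1 b ∪ F)
  (a, b, c)

/-- The sets `G_n` of P-positions computed by the Mex algorithm. -/
noncomputable def Gset : ℕ → Set (ℕ × ℕ × ℕ)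
  | 0 => {(0, 0, 0)}
  | n + 1 => Gset n ∪ {step (Gset n)}

/-- The `n`-th P-position `(v_1(n), v_2(n), v_3(n))`. -/
noncomputable def v : ℕ → ℕ × ℕ × ℕ
  | 0 => (0, 0, 0)
  | n + 1 => step (Gset n)

noncomputable def v1 (n : ℕ) : ℕ := (v n).1
noncomputable def v2 (n : ℕ) : ℕ := (v n).2.1
noncomputable def v3 (n : ℕ) : ℕ := (v n).2.2

/-- `F_n`: the set of coordinates of elements of `G_n`. -/
noncomputable def Fset (n : ℕ) : Set ℕ := coords (Gset n)

/-- `D_n`: the set of pairwise coordinate differences over `G_n`. -/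
noncomputable def Dset (n : ℕ) : Set ℕ := diffs (Gset n)

lemma mex_le {S : Set ℕ} {k : ℕ} (h : k ∉ S) : mex S ≤ k := Nat.sInf_le h
lemma mem_of_lt_mex {S : Set ℕ} {k : ℕ} (h : k < mex S) : k ∈ S := by
  by_contra hk
  exact absurd (Nat.sInf_le (show k ∈ {m : ℕ | m ∉ S} from hk)) (not_le.mpr h)
lemma le_mex {S : Set ℕ} (hS : S.Finite) {k : ℕ} (h : ∀ j < k, j ∈ S) : k ≤ mex S := by
  obtain ⟨x, hx⟩ := hS.infinite_compl.nonempty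
  exact le_csInf ⟨x, hx⟩ (fun t ht => not_lt.mp (fun c => ht (h t c)))
lemma mex_not_mem {S : Set ℕ} (hS : S.Finite) : mex S ∉ S := by
  have : mex S ∈ {m : ℕ | m ∉ S} := Nat.sInf_mem (by
    obtain ⟨x, hx⟩ := hS.infinite_compl.nonempty
    exact ⟨x, hx⟩)
  exact this
lemma mex_mono {S T : Set ℕ} (hT : T.Finite) (h : S ⊆ T) : mex S ≤ mex T :=
  mex_le (fun c => mex_not_mem hT (h c))
lemma mex_eq {S : Set ℕ} {k : ℕ} (hk : k ∉ S) (h : ∀ j < k, j ∈ S) : mex S = k :=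
  le_antisymm (mex_le hk) (le_csInf ⟨k, hk⟩ (fun t ht => not_lt.mp (fun c => ht (h t c))))

noncomputable def aa (n : ℕ) : ℕ := mex (Fset n)
noncomputable def SB (n : ℕ) : Set ℕ := (fun d => aa n + d) '' Dset n ∪ Set.Icc 1 (aa n) ∪ Fset n
noncomputable def bb (n : ℕ) : ℕ := mex (SB n)
noncomputable def SC (n : ℕ) : Set ℕ := (fun d => bb n + d) '' Dset n ∪ Set.Icc 1 (bb n) ∪ Fset n
noncomputable def cc (n : ℕ) : ℕ := mex (SC n)

lemma v_succ (n : ℕ) : v (n+1) = (aa n, bb n, cc n) := rfl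

lemma Gset_finite (n : ℕ) : (Gset n).Finite := by
  induction n with
  | zero => exact Set.finite_singleton _
  | succ n ih => exact ih.union (Set.finite_singleton _)

lemma Fset_finite (n : ℕ) : (Fset n).Finite := by
  have h : Fset n ⊆ (fun x : ℕ×ℕ×ℕ => x.1) '' Gset n ∪ (fun x : ℕ×ℕ×ℕ => x.2.1) '' Gset n
      ∪ (fun x : ℕ×ℕ×ℕ => x.2.2) '' Gset n := by
    rintro m ⟨x, hx, h | h | h⟩
    · exact Or.inl (Or.inl ⟨x, hx, h.symm⟩)
    · exact Or.inl (Or.inr ⟨x, hx, h.symm⟩)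
    · exact Or.inr ⟨x, hx, h.symm⟩
  exact Set.Finite.subset ((((Gset_finite n).image _).union ((Gset_finite n).image _)).union
    ((Gset_finite n).image _)) h

lemma Dset_finite (n : ℕ) : (Dset n).Finite := by
  have h : Dset n ⊆ (fun x : ℕ×ℕ×ℕ => x.2.1 - x.1) '' Gset n ∪ (fun x : ℕ×ℕ×ℕ => x.2.2 - x.2.1) '' Gset n
      ∪ (fun x : ℕ×ℕ×ℕ => x.2.2 - x.1) '' Gset n := by
    rintro m ⟨x, hx, h | h | h⟩
    · exact Or.inl (Or.inl ⟨x, hx, h.symm⟩)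
    · exact Or.inl (Or.inr ⟨x, hx, h.symm⟩)
    · exact Or.inr ⟨x, hx, h.symm⟩
  exact Set.Finite.subset ((((Gset_finite n).image _).union ((Gset_finite n).image _)).union
    ((Gset_finite n).image _)) h

lemma SB_finite (n : ℕ) : (SB n).Finite :=
  (((Dset_finite n).image _).union (Set.finite_Icc _ _)).union (Fset_finite n)
lemma SC_finite (n : ℕ) : (SC n).Finite :=
  (((Dset_finite n).image _).union (Set.finite_Icc _ _)).union (Fset_finite n)

lemma mem_Gset {n : ℕ} {x : ℕ × ℕ × ℕ} :
    x ∈ Gset n ↔ x = (0,0,0) ∨ ∃ k, k < n ∧ x = (aa k, bb k, cc k) := by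
  induction n with
  | zero => simp [Gset]
  | succ n ih =>
    have hstep : step (Gset n) = (aa n, bb n, cc n) := rfl
    simp only [Gset, Set.mem_union, ih, Set.mem_singleton_iff, hstep]
    constructor
    · rintro ((h | ⟨k, hk, rfl⟩) | h)
      · exact Or.inl h
      · exact Or.inr ⟨k, Nat.lt_succ_of_lt hk, rfl⟩
      · exact Or.inr ⟨n, Nat.lt_succ_self n, h⟩
    · rintro (h | ⟨k, hk, rfl⟩)
      · exact Or.inl (Or.inl h)
      · rcases Nat.lt_succ_iff_lt_or_eq.mp hk with h | rfl
        · exact Or.inl (Or.inr ⟨k, h, rfl⟩)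
        · exact Or.inr rfl

lemma mem_Fset {n m : ℕ} :
    m ∈ Fset n ↔ m = 0 ∨ ∃ k, k < n ∧ (m = aa k ∨ m = bb k ∨ m = cc k) := by
  constructor
  · rintro ⟨x, hx, hm⟩
    rcases mem_Gset.mp hx with rfl | ⟨k, hk, rfl⟩
    · rcases hm with rfl | rfl | rfl <;> exact Or.inl rfl
    · exact Or.inr ⟨k, hk, hm⟩
  · rintro (rfl | ⟨k, hk, hm⟩)
    · exact ⟨(0,0,0), mem_Gset.mpr (Or.inl rfl), Or.inl rfl⟩
    · exact ⟨(aa k, bb k, cc k), mem_Gset.mpr (Or.inr ⟨k, hk, rfl⟩), hm⟩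

lemma mem_Dset {n d : ℕ} :
    d ∈ Dset n ↔ d = 0 ∨ ∃ k, k < n ∧ (d = bb k - aa k ∨ d = cc k - bb k ∨ d = cc k - aa k) := by
  constructor
  · rintro ⟨x, hx, hm⟩
    rcases mem_Gset.mp hx with rfl | ⟨k, hk, rfl⟩
    · rcases hm with rfl | rfl | rfl <;> exact Or.inl rfl
    · exact Or.inr ⟨k, hk, hm⟩
  · rintro (rfl | ⟨k, hk, hm⟩)
    · exact ⟨(0,0,0), mem_Gset.mpr (Or.inl rfl), Or.inl rfl⟩
    · exact ⟨(aa k, bb k, cc k), mem_Gset.mpr (Or.inr ⟨k, hk, rfl⟩), hm⟩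

lemma zero_mem_F (n : ℕ) : 0 ∈ Fset n := mem_Fset.mpr (Or.inl rfl)
lemma zero_mem_D (n : ℕ) : 0 ∈ Dset n := mem_Dset.mpr (Or.inl rfl)
lemma Fset_mono {k n : ℕ} (h : k ≤ n) : Fset k ⊆ Fset n := by
  intro m hm
  rcases mem_Fset.mp hm with h0 | ⟨j, hj, hm⟩
  · exact mem_Fset.mpr (Or.inl h0)
  · exact mem_Fset.mpr (Or.inr ⟨j, lt_of_lt_of_le hj h, hm⟩)
lemma Dset_mono {k n : ℕ} (h : k ≤ n) : Dset k ⊆ Dset n := by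
  intro m hm
  rcases mem_Dset.mp hm with h0 | ⟨j, hj, hm⟩
  · exact mem_Dset.mpr (Or.inl h0)
  · exact mem_Dset.mpr (Or.inr ⟨j, lt_of_lt_of_le hj h, hm⟩)

-- generic layer (to be appended after test2 content)
lemma mu_pos (n : ℕ) : 1 ≤ mex (Dset n) := by
  rcases Nat.eq_zero_or_pos (mex (Dset n)) with h | h
  · exact absurd (h ▸ zero_mem_D n) (h ▸ mex_not_mem (Dset_finite n))
  · exact h
lemma aa_pos (n : ℕ) : 1 ≤ aa n := by
  rcases Nat.eq_zero_or_pos (aa n) with h | h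
  · exfalso
    apply mex_not_mem (Fset_finite n)
    show aa n ∈ Fset n
    rw [h]; exact zero_mem_F n
  · exact h
lemma mu_mono {k n : ℕ} (h : k ≤ n) : mex (Dset k) ≤ mex (Dset n) :=
  mex_mono (Dset_finite n) (Dset_mono h)
lemma aa_mono {k n : ℕ} (h : k ≤ n) : aa k ≤ aa n :=
  mex_mono (Fset_finite n) (Fset_mono h)
lemma aa_not_mem (n : ℕ) : aa n ∉ Fset n := mex_not_mem (Fset_finite n)
lemma aa_strict (n : ℕ) : aa n < aa (n+1) := by
  refine lt_of_le_of_ne (aa_mono (Nat.le_succ n)) (fun h => ?_)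
  exact aa_not_mem (n+1) (h ▸ mem_Fset.mpr (Or.inr ⟨n, Nat.lt_succ_self n, Or.inl rfl⟩))
lemma aa_lt {k n : ℕ} (h : k < n) : aa k < aa n :=
  lt_of_lt_of_le (aa_strict k) (aa_mono h)
lemma mem_SB_of_lt {n j : ℕ} (h : j < bb n) : j ∈ SB n := mem_of_lt_mex h
lemma mem_SC_of_lt {n j : ℕ} (h : j < cc n) : j ∈ SC n := mem_of_lt_mex h
lemma b_lb (n : ℕ) : aa n + mex (Dset n) ≤ bb n := by
  refine le_mex (SB_finite n) (fun j hj => ?_)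
  rcases Nat.lt_or_ge j (aa n + 1) with h | h
  · rcases Nat.eq_zero_or_pos j with rfl | hp
    · exact Or.inr (zero_mem_F n)
    · exact Or.inl (Or.inr ⟨hp, Nat.lt_succ_iff.mp h⟩)
  · have hd : j - aa n < mex (Dset n) := by omega
    exact Or.inl (Or.inl ⟨j - aa n, mem_of_lt_mex hd, show aa n + (j - aa n) = j by omega⟩)
lemma c_lb (n : ℕ) : bb n + mex (Dset n) ≤ cc n := by
  refine le_mex (SC_finite n) (fun j hj => ?_)
  rcases Nat.lt_or_ge j (bb n + 1) with h | h
  · rcases Nat.eq_zero_or_pos j with rfl | hp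
    · exact Or.inr (zero_mem_F n)
    · exact Or.inl (Or.inr ⟨hp, Nat.lt_succ_iff.mp h⟩)
  · have hd : j - bb n < mex (Dset n) := by omega
    exact Or.inl (Or.inl ⟨j - bb n, mem_of_lt_mex hd, show bb n + (j - bb n) = j by omega⟩)
lemma aa_lt_bb (n : ℕ) : aa n < bb n :=
  lt_of_lt_of_le (by have := mu_pos n; omega) (b_lb n)
lemma bb_lt_cc (n : ℕ) : bb n < cc n :=
  lt_of_lt_of_le (by have := mu_pos n; omega) (c_lb n)
lemma bb_not_mem_F (n : ℕ) : bb n ∉ Fset n :=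
  fun h => mex_not_mem (SB_finite n) (Or.inr h)
lemma cc_not_mem_F (n : ℕ) : cc n ∉ Fset n :=
  fun h => mex_not_mem (SC_finite n) (Or.inr h)
lemma bb_not_shift {n d : ℕ} (hd : d ∈ Dset n) : bb n ≠ aa n + d :=
  fun h => mex_not_mem (SB_finite n) (Or.inl (Or.inl ⟨d, hd, h.symm⟩))
lemma cc_not_shift {n d : ℕ} (hd : d ∈ Dset n) : cc n ≠ bb n + d :=
  fun h => mex_not_mem (SC_finite n) (Or.inl (Or.inl ⟨d, hd, h.symm⟩))

def PKG (n : ℕ) : Prop :=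
  cc n = bb n + mex (Dset n) ∧ IsGreatest (Fset (n+1)) (cc n) ∧
    ∀ e, e < bb n - aa n → e ∈ Dset (n+1)

lemma mu_strict {k : ℕ} (h : PKG k) : mex (Dset k) < mex (Dset (k+1)) := by
  have hmem : mex (Dset k) ∈ Dset (k+1) :=
    mem_Dset.mpr (Or.inr ⟨k, Nat.lt_succ_self k, Or.inr (Or.inl (by rw [h.1]; omega))⟩)
  exact lt_of_le_of_ne (mu_mono (Nat.le_succ k))
    (fun he => mex_not_mem (Dset_finite (k+1)) (he ▸ hmem))

lemma tt_lt {k : ℕ} (h : PKG k) : bb k - aa k < mex (Dset (k+1)) := by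
  have hmem : bb k - aa k ∈ Dset (k+1) :=
    mem_Dset.mpr (Or.inr ⟨k, Nat.lt_succ_self k, Or.inl rfl⟩)
  rcases Nat.lt_or_ge (bb k - aa k) (mex (Dset (k+1))) with h' | h'
  · exact h'
  rcases Nat.eq_or_lt_of_le h' with he | hlt
  · exact absurd (he ▸ hmem) (mex_not_mem (Dset_finite (k+1)))
  · exact absurd (h.2.2 _ hlt) (mex_not_mem (Dset_finite (k+1)))

lemma pkg_base : PKG 0 := by
  have hF0 : ∀ m : ℕ, m ∈ Fset 0 ↔ m = 0 := by
    intro m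
    rw [mem_Fset]
    constructor
    · rintro (h | ⟨k, hk, _⟩)
      · exact h
      · omega
    · exact fun h => Or.inl h
  have hD0 : ∀ d : ℕ, d ∈ Dset 0 ↔ d = 0 := by
    intro d
    rw [mem_Dset]
    constructor
    · rintro (h | ⟨k, hk, _⟩)
      · exact h
      · omega
    · exact fun h => Or.inl h
  have haa0 : aa 0 = 1 := by
    refine mex_eq (fun h => by simp [hF0] at h) (fun j hj => ?_)
    have : j = 0 := by omega
    rw [this, hF0]
  have hmu0 : mex (Dset 0) = 1 := by
    refine mex_eq (fun h => by simp [hD0] at h) (fun j hj => ?_)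
    have : j = 0 := by omega
    rw [this, hD0]
  have hbb0 : bb 0 = 2 := by
    refine mex_eq ?_ (fun j hj => ?_)
    · rintro ((⟨d, hd, hde⟩ | hicc) | hF)
      · rw [hD0] at hd
        have hde' : aa 0 + d = 2 := hde
        omega
      · rw [Set.mem_Icc, haa0] at hicc; omega
      · rw [hF0] at hF; omega
    · interval_cases j
      · exact Or.inr ((hF0 0).mpr rfl)
      · exact Or.inl (Or.inr (by rw [Set.mem_Icc, haa0]; omega))
  have hcc0 : cc 0 = 3 := by
    refine mex_eq ?_ (fun j hj => ?_)
    · rintro ((⟨d, hd, hde⟩ | hicc) | hF)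
      · rw [hD0] at hd
        have hde' : bb 0 + d = 3 := hde
        omega
      · rw [Set.mem_Icc, hbb0] at hicc; omega
      · rw [hF0] at hF; omega
    · interval_cases j
      · exact Or.inr ((hF0 0).mpr rfl)
      · exact Or.inl (Or.inr (by rw [Set.mem_Icc, hbb0]; omega))
      · exact Or.inl (Or.inr (by rw [Set.mem_Icc, hbb0]; omega))
  refine ⟨by omega, ⟨?_, ?_⟩, ?_⟩
  · exact mem_Fset.mpr (Or.inr ⟨0, Nat.zero_lt_one, Or.inr (Or.inr rfl)⟩)
  · intro x hx
    rcases mem_Fset.mp hx with rfl | ⟨k, hk, he⟩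
    · omega
    · have : k = 0 := by omega
      subst this
      rcases he with rfl | rfl | rfl <;> omega
  · intro e he
    rw [hbb0, haa0] at he
    have : e = 0 := by omega
    rw [this]
    exact zero_mem_D _

lemma pkg_step {n : ℕ} (hn : 1 ≤ n) (IH : ∀ m, m < n → PKG m) : PKG n := by
  have hP3 : ∀ k, k < n → cc k = bb k + mex (Dset k) := fun k hk => (IH k hk).1
  have htt : ∀ k, k < n → bb k - aa k < mex (Dset n) :=
    fun k hk => lt_of_lt_of_le (tt_lt (IH k hk)) (mu_mono hk)
  have hmun : ∀ k, k < n → mex (Dset k) < mex (Dset n) :=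
    fun k hk => lt_of_lt_of_le (mu_strict (IH k hk)) (mu_mono hk)
  have hbk : ∀ k, k < n → bb k + 2 ≤ aa n + mex (Dset n) := by
    intro k hk
    have h1 := aa_lt hk
    have h2 := htt k hk
    have h3 := aa_lt_bb k
    omega
  have hcs : ∀ k, k < n → cc k = aa k + (bb k - aa k) + mex (Dset k) := by
    intro k hk
    have h1 := hP3 k hk
    have h2 := aa_lt_bb k
    omega
  have hsstep : ∀ k, k + 1 < n → (cc k - aa k) + 2 ≤ cc (k+1) - aa (k+1) := by
    intro k hk
    have e1 := hcs k (by omega)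
    have e2 := hcs (k+1) hk
    have h1 := htt k (by omega)
    have h2 : mex (Dset k) < mex (Dset (k+1)) := mu_strict (IH k (by omega))
    have h3 : bb k - aa k < mex (Dset (k+1)) := tt_lt (IH k (by omega))
    have h4 := b_lb (k+1)
    have h5 := aa_lt_bb (k+1)
    omega
  have hsgap : ∀ j, j < n → ∀ i, i < j → (cc i - aa i) + 2 ≤ cc j - aa j := by
    intro j
    induction j with
    | zero => omega
    | succ l ihl =>
      intro hjn i hij
      rcases Nat.lt_succ_iff_lt_or_eq.mp hij with h | rfl
      · have h1 := ihl (by omega) i h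
        have h2 := hsstep l (by omega)
        omega
      · exact hsstep i hjn
  have cgap : ∀ i j, i < j → j < n → cc i + 3 ≤ cc j := by
    intro i j hij hjn
    have e1 := hcs i (by omega)
    have e2 := hcs j hjn
    have h1 := hsgap j hjn i hij
    have h2 := aa_lt hij
    omega
  have ccmono : ∀ i j, i ≤ j → j < n → cc i ≤ cc j := by
    intro i j hij hjn
    rcases Nat.eq_or_lt_of_le hij with rfl | h
    · exact le_refl _
    · have := cgap i j h hjn; omega
  have hD7 : ∀ d, d ∈ Dset n → mex (Dset n) ≤ d → ∃ k, k < n ∧ d = cc k - aa k := by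
    intro d hd hmu
    rcases mem_Dset.mp hd with rfl | ⟨k, hk, h | h | h⟩
    · have := mu_pos n; omega
    · exact absurd h (by have := htt k hk; omega)
    · exfalso
      have h2 : cc k - bb k = mex (Dset k) := by have := hP3 k hk; omega
      have := hmun k hk; omega
    · exact ⟨k, hk, h⟩
  have hD9 : ∀ j, j < n → aa n + mex (Dset n) < cc j → cc j < bb n → False := by
    intro j hj h1 h2
    have hx0F : aa n + mex (Dset n) ∈ Fset n := by
      rcases mem_SB_of_lt (lt_trans h1 h2) with (⟨d, hd, hde⟩ | hicc) | hF
      · exfalso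
        have hde' : aa n + d = aa n + mex (Dset n) := hde
        have : d = mex (Dset n) := by omega
        exact mex_not_mem (Dset_finite n) (this ▸ hd)
      · exfalso; rw [Set.mem_Icc] at hicc; have := mu_pos n; omega
      · exact hF
    obtain h0 | ⟨i, hi, hcase⟩ := mem_Fset.mp hx0F
    · have := aa_pos n; have := mu_pos n; omega
    rcases hcase with he | he | he
    · have := aa_lt hi; have := mu_pos n; omega
    · have := hbk i hi; omega
    have hij : i < j := by
      rcases Nat.lt_or_ge i j with h | h
      · exact h
      · exfalso; have := ccmono j i h hi; omega
    have h3 := cgap i j hij hj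
    have key : ∀ t, 1 ≤ t → t ≤ 2 → mex (Dset n) + t ∈ Dset n := by
      intro t ht1 ht2
      rcases mem_SB_of_lt (show aa n + (mex (Dset n) + t) < bb n by omega)
        with (⟨d, hd, hde⟩ | hicc) | hF
      · have hde' : aa n + d = aa n + (mex (Dset n) + t) := hde
        have : d = mex (Dset n) + t := by omega
        exact this ▸ hd
      · exfalso; rw [Set.mem_Icc] at hicc; have := mu_pos n; omega
      · exfalso
        obtain h0 | ⟨l, hl, hle⟩ := mem_Fset.mp hF
        · have := aa_pos n; omega
        rcases hle with he2 | he2 | he2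
        · have := aa_lt hl; have := mu_pos n; omega
        · have := hbk l hl; omega
        · rcases lt_trichotomy l i with h | h | h
          · have := cgap l i h hi; omega
          · subst h; omega
          · have := cgap i l h hl; omega
    obtain ⟨k, hk, hke⟩ := hD7 _ (key 1 (by omega) (by omega)) (by omega)
    obtain ⟨k', hk', hke'⟩ := hD7 _ (key 2 (by omega) (by omega)) (by omega)
    rcases lt_trichotomy k k' with h | h | h
    · have := hsgap k' hk' k h; omega
    · subst h; omega
    · have := hsgap k hk k' h; omega
  have hD10 : ∀ x, x ∈ Fset n → aa n < x → x < bb n →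
      (x - aa n ∈ Dset n ∨ x - aa n = mex (Dset n)) := by
    intro x hxF hax hxb
    obtain h0 | ⟨k, hk, he⟩ := mem_Fset.mp hxF
    · omega
    rcases he with rfl | rfl | rfl
    · exact absurd (aa_lt hk) (by omega)
    · left; have := hbk k hk; exact mem_of_lt_mex (by omega)
    · have h9 : ¬ (aa n + mex (Dset n) < cc k) := fun h => hD9 k hk h hxb
      rcases Nat.lt_or_ge (cc k - aa n) (mex (Dset n)) with h | h
      · left; exact mem_of_lt_mex h
      · right; omega
  have hP4N : IsGreatest (Fset n) (cc (n-1)) := by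
    have h := (IH (n-1) (by omega)).2.1
    have he : n - 1 + 1 = n := by omega
    rwa [he] at h
  have hmain : cc (n-1) + 3 ≤ bb n + mex (Dset n) := by
    have h1 := hbk (n-1) (by omega)
    have h2 := hmun (n-1) (by omega)
    have h3 := hP3 (n-1) (by omega)
    have h4 := b_lb n
    omega
  have hP3n : cc n = bb n + mex (Dset n) := by
    refine le_antisymm (mex_le ?_) (c_lb n)
    rintro ((⟨d, hd, hde⟩ | hicc) | hF)
    · have hde' : bb n + d = bb n + mex (Dset n) := hde
      have : d = mex (Dset n) := by omega
      exact mex_not_mem (Dset_finite n) (this ▸ hd)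
    · rw [Set.mem_Icc] at hicc; have := mu_pos n; omega
    · have := hP4N.2 hF; omega
  have hP4n : IsGreatest (Fset (n+1)) (cc n) := by
    constructor
    · exact mem_Fset.mpr (Or.inr ⟨n, Nat.lt_succ_self n, Or.inr (Or.inr rfl)⟩)
    · intro x hx
      obtain rfl | ⟨k, hk, he⟩ := mem_Fset.mp hx
      · omega
      rcases Nat.lt_succ_iff_lt_or_eq.mp hk with hkn | hke
      · have hxF : x ∈ Fset n := mem_Fset.mpr (Or.inr ⟨k, hkn, he⟩)
        have := hP4N.2 hxF
        omega
      · have h1 := aa_lt_bb k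
        have h2 := bb_lt_cc k
        have h3 : cc k = cc n := by rw [hke]
        rcases he with rfl | rfl | rfl <;> omega
  have hP5n : ∀ e, e < bb n - aa n → e ∈ Dset (n+1) := by
    intro e he
    have hab := aa_lt_bb n
    rcases Nat.eq_zero_or_pos e with rfl | hep
    · exact zero_mem_D _
    rcases mem_SB_of_lt (show aa n + e < bb n by omega) with (⟨d, hd, hde⟩ | hicc) | hF
    · have hde' : aa n + d = aa n + e := hde
      have : d = e := by omega
      exact Dset_mono (Nat.le_succ n) (this ▸ hd)
    · exfalso; rw [Set.mem_Icc] at hicc; omega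
    · rcases hD10 _ hF (by omega) (by omega) with h | h
      · have h2 : aa n + e - aa n = e := by omega
        rw [h2] at h
        exact Dset_mono (Nat.le_succ n) h
      · have hmu_mem : mex (Dset n) ∈ Dset (n+1) :=
          mem_Dset.mpr (Or.inr ⟨n, Nat.lt_succ_self n, Or.inr (Or.inl (by rw [hP3n]; omega))⟩)
        have h2 : e = mex (Dset n) := by omega
        exact h2 ▸ hmu_mem
  exact ⟨hP3n, hP4n, hP5n⟩

theorem pkg : ∀ n, PKG n := by
  intro n
  induction n using Nat.strong_induction_on with
  | _ n IH =>
    rcases Nat.eq_zero_or_pos n with rfl | hn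
    · exact pkg_base
    · exact pkg_step hn IH

theorem stmt5 : ∀ n : ℕ, 1 ≤ n →
    IsGreatest (Fset n) (v3 n) ∧ v3 n = v2 n + mex (Dset (n - 1)) := by
  intro n hn
  obtain ⟨m, rfl⟩ : ∃ m, n = m + 1 := ⟨n - 1, by omega⟩
  have h := pkg m
  have h2 : v2 (m+1) = bb m := rfl
  have h3 : v3 (m+1) = cc m := rfl
  have h4 : m + 1 - 1 = m := by omega
  rw [h2, h3, h4]
  exact ⟨h.2.1, h.1⟩
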